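/- Let u₀ ∈ V be a fixed point of A (Au₀ = u₀) satisfying u₀(x) ≤ √x for all x ∈ [ε,Λ]. Then u₀ is the unique fixed point of A in V; that is, if v₀ ∈ V satisfies Av₀ = v₀, then v₀ = u₀. -/

import Mathlib

open Real Set MeasureTheory intervalIntegral

/-- The function `w(x) = (4ε/λ)·√(ε/(Λx))`. -/
noncomputable def wfun (lam ε Λ : ℝ) (x : ℝ) : ℝ :=
  (4 * ε / lam) * Real.sqrt (ε / (Λ * x))

/-- The nonlinear integral operator `A`. -/
noncomputable def opA (lam ε Λ : ℝ) (u : ℝ → ℝ) (x : ℝ) : ℝ :=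
  (lam / 2) * ∫ y in ε..Λ, (1 / (y + x + |y - x|)) * (y * u y / (y + (u y) ^ 2))

/-- Membership in the set `V`: continuous on `[ε,Λ]` and `w(x) ≤ u(x) ≤ (λ/4)√Λ` there. -/
def memV (lam ε Λ : ℝ) (u : ℝ → ℝ) : Prop :=
  ContinuousOn u (Set.Icc ε Λ) ∧
    ∀ x ∈ Set.Icc ε Λ, wfun lam ε Λ x ≤ u x ∧ u x ≤ (lam / 4) * Real.sqrt Λ

/- ### Auxiliary machinery for the uniqueness proof.

The kernel `1/(y+x+|y-x|) = 1/(2 max(x,y))` is the Green's function of the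
Sturm–Liouville operator `u ↦ -(x² u')'` with boundary conditions `u'(ε) = 0`
and `Λ u'(Λ) + u(Λ) = 0`.  Hence any continuous positive fixed point of `opA`
satisfies `(x²u')' = -(λ/4)·x u/(x+u²)`, and a Picone / Brezis–Oswald type
identity shows that positive fixed points are unique. -/

noncomputable def Gfun (ε : ℝ) (u : ℝ → ℝ) (y : ℝ) : ℝ := y * u y / (max y ε + u y ^ 2)
noncomputable def Pfun (ε : ℝ) (u : ℝ → ℝ) (x : ℝ) : ℝ := ∫ t in ε..x, Gfun ε u t
noncomputable def Qfun (ε Λ : ℝ) (u : ℝ → ℝ) (x : ℝ) : ℝ :=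
  ∫ t in x..Λ, Gfun ε u t / max t ε
noncomputable def uhat (lam ε Λ : ℝ) (u : ℝ → ℝ) (x : ℝ) : ℝ :=
  lam / 4 * (Pfun ε u x / x + Qfun ε Λ u x)
noncomputable def dhat (lam ε : ℝ) (u : ℝ → ℝ) (x : ℝ) : ℝ := -(lam / 4) * Pfun ε u x / x ^ 2

lemma Gfun_cont {ε : ℝ} (hε : 0 < ε) {u : ℝ → ℝ} (hu : Continuous u) :
    Continuous (Gfun ε u) := by
  apply Continuous.div (by fun_prop) (by fun_prop)
  intro y
  have h1 : ε ≤ max y ε := le_max_right _ _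
  nlinarith [sq_nonneg (u y)]

lemma Gdivmax_cont {ε : ℝ} (hε : 0 < ε) {u : ℝ → ℝ} (hu : Continuous u) :
    Continuous (fun t => Gfun ε u t / max t ε) := by
  apply Continuous.div (Gfun_cont hε hu) (by fun_prop)
  intro y
  have h1 : ε ≤ max y ε := le_max_right _ _
  linarith

lemma Pfun_hasDeriv {ε : ℝ} (hε : 0 < ε) {u : ℝ → ℝ} (hu : Continuous u) (x : ℝ) :
    HasDerivAt (Pfun ε u) (Gfun ε u x) x := by
  have hc := Gfun_cont hε hu
  exact (intervalIntegral.integral_hasStrictDerivAt_right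
    (hc.intervalIntegrable _ _)
    hc.stronglyMeasurable.stronglyMeasurableAtFilter
    hc.continuousAt).hasDerivAt

lemma Qfun_hasDeriv {ε Λ : ℝ} (hε : 0 < ε) {u : ℝ → ℝ} (hu : Continuous u) (x : ℝ) :
    HasDerivAt (Qfun ε Λ u) (-(Gfun ε u x / max x ε)) x := by
  have hc := Gdivmax_cont hε hu
  exact (intervalIntegral.integral_hasStrictDerivAt_left
    (hc.intervalIntegrable _ _)
    hc.stronglyMeasurable.stronglyMeasurableAtFilter
    hc.continuousAt).hasDerivAt

lemma Pfun_cont {ε : ℝ} (hε : 0 < ε) {u : ℝ → ℝ} (hu : Continuous u) :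
    Continuous (Pfun ε u) :=
  continuous_iff_continuousAt.2 fun x => (Pfun_hasDeriv hε hu x).continuousAt

lemma opA_eq (ε Λ lam : ℝ) (hε : 0 < ε) {u : ℝ → ℝ} (hu : Continuous u)
    {x : ℝ} (hx : x ∈ Icc ε Λ) :
    opA lam ε Λ u x = (lam / 4) * (Pfun ε u x / x + Qfun ε Λ u x) := by
  have hx0 : (0:ℝ) < x := lt_of_lt_of_le hε hx.1
  set f : ℝ → ℝ := fun y => (1 / (y + x + |y - x|)) * (y * u y / (y + (u y) ^ 2)) with hf
  have hfc : ContinuousOn f (Icc ε Λ) := by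
    apply ContinuousOn.mul
    · apply ContinuousOn.div continuousOn_const (by fun_prop)
      intro y hy
      have h1 : (0:ℝ) ≤ |y - x| := abs_nonneg _
      have h2 : ε ≤ y := hy.1
      exact ne_of_gt (by linarith)
    · apply ContinuousOn.div (by fun_prop) (by fun_prop)
      intro y hy
      have h2 : ε ≤ y := hy.1
      nlinarith [sq_nonneg (u y)]
  have hi1 : IntervalIntegrable f volume ε x :=
    (hfc.mono (by rw [uIcc_of_le hx.1]; exact Icc_subset_Icc le_rfl hx.2)).intervalIntegrable
  have hi2 : IntervalIntegrable f volume x Λ :=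
    (hfc.mono (by rw [uIcc_of_le hx.2]; exact Icc_subset_Icc hx.1 le_rfl)).intervalIntegrable
  have hsplit : (∫ y in ε..Λ, f y) = (∫ y in ε..x, f y) + ∫ y in x..Λ, f y :=
    (integral_add_adjacent_intervals hi1 hi2).symm
  have he1 : (∫ y in ε..x, f y) = ∫ y in ε..x, (1 / (2 * x)) * Gfun ε u y := by
    apply integral_congr
    intro y hy
    rw [uIcc_of_le hx.1] at hy
    have hyx : y ≤ x := hy.2
    have hyε : ε ≤ y := hy.1
    have habs : |y - x| = x - y := by rw [abs_of_nonpos (by linarith)]; ring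
    have hmax : max y ε = y := max_eq_left hyε
    simp only [hf, Gfun, habs, hmax]
    have : y + x + (x - y) = 2 * x := by ring
    rw [this]
  have he2 : (∫ y in x..Λ, f y) = ∫ y in x..Λ, (1 / 2) * (Gfun ε u y / max y ε) := by
    apply integral_congr
    intro y hy
    rw [uIcc_of_le hx.2] at hy
    have hyx : x ≤ y := hy.1
    have hyε : ε ≤ y := le_trans hx.1 hyx
    have hy0 : (0:ℝ) < y := lt_of_lt_of_le hε hyε
    have habs : |y - x| = y - x := abs_of_nonneg (by linarith)
    have hmax : max y ε = y := max_eq_left hyε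
    simp only [hf, Gfun, habs, hmax]
    have h2y : y + x + (y - x) = 2 * y := by ring
    rw [h2y]
    have hd : y + u y ^ 2 ≠ 0 := by nlinarith [sq_nonneg (u y)]
    field_simp
  rw [opA, ← hf, hsplit, he1, he2, intervalIntegral.integral_const_mul, intervalIntegral.integral_const_mul]
  rw [show (∫ t in ε..x, Gfun ε u t) = Pfun ε u x from rfl,
      show (∫ y in x..Λ, Gfun ε u y / max y ε) = Qfun ε Λ u x from rfl]
  field_simp
  ring

lemma uhat_hasDeriv {ε Λ lam : ℝ} (hε : 0 < ε) {u : ℝ → ℝ} (hu : Continuous u)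
    {x : ℝ} (hx : x ∈ Icc ε Λ) :
    HasDerivAt (uhat lam ε Λ u) (dhat lam ε u x) x := by
  have hx0 : (0:ℝ) < x := lt_of_lt_of_le hε hx.1
  have h1 : HasDerivAt (fun y => Pfun ε u y / y)
      ((Gfun ε u x * x - Pfun ε u x * 1) / x ^ 2) x :=
    (Pfun_hasDeriv hε hu x).div (hasDerivAt_id x) hx0.ne'
  have h3 := (h1.add (Qfun_hasDeriv (Λ := Λ) hε hu x)).const_mul (lam / 4)
  have h4 : HasDerivAt (uhat lam ε Λ u)
      (lam / 4 * ((Gfun ε u x * x - Pfun ε u x * 1) / x ^ 2 + -(Gfun ε u x / max x ε))) x := h3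
  convert h4 using 1
  rw [max_eq_left hx.1, dhat]
  field_simp
  ring

noncomputable def Wfun (lam ε Λ : ℝ) (u v : ℝ → ℝ) (x : ℝ) : ℝ :=
  -(lam / 4) * Pfun ε u x * ((uhat lam ε Λ u x) ^ 2 - (uhat lam ε Λ v x) ^ 2) / uhat lam ε Λ u x
  + -(lam / 4) * Pfun ε v x * ((uhat lam ε Λ v x) ^ 2 - (uhat lam ε Λ u x) ^ 2) / uhat lam ε Λ v x

noncomputable def Efun (lam ε Λ : ℝ) (u v : ℝ → ℝ) (x : ℝ) : ℝ :=
  lam / 4 * x * ((uhat lam ε Λ u x) ^ 2 - (uhat lam ε Λ v x) ^ 2) ^ 2 /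
      ((x + (uhat lam ε Λ u x) ^ 2) * (x + (uhat lam ε Λ v x) ^ 2))
  + x ^ 2 * ((uhat lam ε Λ v x * dhat lam ε u x / uhat lam ε Λ u x - dhat lam ε v x) ^ 2
      + (uhat lam ε Λ u x * dhat lam ε v x / uhat lam ε Λ v x - dhat lam ε u x) ^ 2)

lemma W_hasDeriv {ε Λ lam : ℝ} (hε : 0 < ε) {u v : ℝ → ℝ}
    (hu : Continuous u) (hv : Continuous v) {x : ℝ} (hx : x ∈ Icc ε Λ)
    (ha : 0 < uhat lam ε Λ u x) (hb : 0 < uhat lam ε Λ v x)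
    (hGu : Gfun ε u x = x * uhat lam ε Λ u x / (x + (uhat lam ε Λ u x) ^ 2))
    (hGv : Gfun ε v x = x * uhat lam ε Λ v x / (x + (uhat lam ε Λ v x) ^ 2)) :
    HasDerivAt (Wfun lam ε Λ u v) (Efun lam ε Λ u v x) x := by
  have hx0 : (0:ℝ) < x := lt_of_lt_of_le hε hx.1
  have hPa := Pfun_hasDeriv hε hu x
  have hPb := Pfun_hasDeriv hε hv x
  have hda := uhat_hasDeriv (Λ := Λ) (lam := lam) hε hu hx
  have hdb := uhat_hasDeriv (Λ := Λ) (lam := lam) hε hv hx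
  have h1 := ((hPa.const_mul (-(lam / 4))).mul ((hda.pow 2).sub (hdb.pow 2))).div hda ha.ne'
  have h2 := ((hPb.const_mul (-(lam / 4))).mul ((hdb.pow 2).sub (hda.pow 2))).div hdb hb.ne'
  have h := h1.add h2
  have hane : uhat lam ε Λ u x ≠ 0 := ha.ne'
  have hbne : uhat lam ε Λ v x ≠ 0 := hb.ne'
  have hxa : x + (uhat lam ε Λ u x) ^ 2 ≠ 0 := by positivity
  have hxb : x + (uhat lam ε Λ v x) ^ 2 ≠ 0 := by positivity
  convert h using 1
  · rfl
  · rfl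
  · rfl
  rw [Efun, dhat, dhat, hGu, hGv]
  push_cast
  simp only [Pi.mul_apply, Pi.sub_apply, Pi.pow_apply]
  field_simp
  ring

/-- A continuous nonnegative function on `[a,b]` with zero integral vanishes. -/
lemma eq_zero_of_integral_zero {a b : ℝ} (hab : a < b) {f : ℝ → ℝ}
    (hc : ContinuousOn f (Icc a b)) (h0 : ∀ x ∈ Icc a b, 0 ≤ f x)
    (hz : (∫ x in a..b, f x) = 0) : ∀ x ∈ Icc a b, f x = 0 := by
  intro x hx
  by_contra hne
  have hpos : 0 < f x := (h0 x hx).lt_of_ne (Ne.symm hne)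
  have hfi : IntervalIntegrable f volume a b :=
    (hc.mono (by rw [uIcc_of_le hab.le])).intervalIntegrable
  have hae : 0 ≤ᵐ[volume.restrict (Set.uIoc a b)] f := by
    rw [uIoc_of_le hab.le]
    exact (ae_restrict_iff' measurableSet_Ioc).2 (ae_of_all _ fun y hy => h0 y ⟨hy.1.le, hy.2⟩)
  have hiff := integral_pos_iff_support_of_nonneg_ae' hae hfi
  have hvol : volume (Function.support f ∩ Ioc a b) = 0 := by
    by_contra hv
    have : 0 < volume (Function.support f ∩ Ioc a b) := pos_iff_ne_zero.mpr hv
    have hgt : 0 < ∫ x in a..b, f x := hiff.mpr ⟨hab, this⟩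
    rw [hz] at hgt
    exact lt_irrefl _ hgt
  -- find a small interval around x on which f is positive
  have hcw : ContinuousWithinAt f (Icc a b) x := hc x hx
  have hev : ∀ᶠ y in nhdsWithin x (Icc a b), 0 < f y :=
    hcw.eventually (eventually_gt_nhds hpos)
  rcases mem_nhdsWithin.mp hev with ⟨U, hUopen, hxU, hUsub⟩
  rcases Metric.isOpen_iff.mp hUopen x hxU with ⟨δ, hδ, hball⟩
  set c := max a (x - δ / 2) with hc'
  set d := min b (x + δ / 2) with hd'
  have hcd : c < d := by
    rw [hc', hd']
    apply max_lt
    · exact lt_min hab (by linarith [hx.1])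
    · exact lt_min (by linarith [hx.2]) (by linarith)
  have hsub : Ioo c d ⊆ Function.support f ∩ Ioc a b := by
    intro y hy
    have hya : a < y := lt_of_le_of_lt (le_max_left _ _) hy.1
    have hyb : y ≤ b := le_of_lt (lt_of_lt_of_le hy.2 (min_le_left _ _))
    have h1 : x - δ / 2 < y := lt_of_le_of_lt (le_max_right _ _) hy.1
    have h2 : y < x + δ / 2 := lt_of_lt_of_le hy.2 (min_le_right _ _)
    have hyU : y ∈ U := by
      apply hball
      rw [Metric.mem_ball, Real.dist_eq, abs_lt]
      constructor <;> linarith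
    have hyIcc : y ∈ Icc a b := ⟨hya.le, hyb⟩
    have : 0 < f y := hUsub ⟨hyU, hyIcc⟩
    exact ⟨Function.mem_support.mpr this.ne', hya, hyb⟩
  have hle : volume (Ioo c d) ≤ volume (Function.support f ∩ Ioc a b) := measure_mono hsub
  rw [hvol, Real.volume_Ioo] at hle
  have : (0 : ENNReal) < ENNReal.ofReal (d - c) := by
    rw [ENNReal.ofReal_pos]; linarith
  exact absurd (le_antisymm hle (by positivity)) this.ne'

lemma key (ε Λ lam : ℝ) (hε : 0 < ε) (hεΛ : ε < Λ) (hlam : 0 < lam)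
    {u v : ℝ → ℝ} (hu : Continuous u) (hv : Continuous v)
    (hup : ∀ y, 0 < u y) (hvp : ∀ y, 0 < v y)
    (hufix : ∀ x ∈ Icc ε Λ, u x = opA lam ε Λ u x)
    (hvfix : ∀ x ∈ Icc ε Λ, v x = opA lam ε Λ v x) :
    ∀ x ∈ Icc ε Λ, v x = u x := by
  have hueq : ∀ x ∈ Icc ε Λ, u x = uhat lam ε Λ u x := fun x hx =>
    (hufix x hx).trans (opA_eq ε Λ lam hε hu hx)
  have hveq : ∀ x ∈ Icc ε Λ, v x = uhat lam ε Λ v x := fun x hx =>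
    (hvfix x hx).trans (opA_eq ε Λ lam hε hv hx)
  have hupos : ∀ x ∈ Icc ε Λ, 0 < uhat lam ε Λ u x := fun x hx => hueq x hx ▸ hup x
  have hvpos : ∀ x ∈ Icc ε Λ, 0 < uhat lam ε Λ v x := fun x hx => hveq x hx ▸ hvp x
  have hGu : ∀ x ∈ Icc ε Λ,
      Gfun ε u x = x * uhat lam ε Λ u x / (x + (uhat lam ε Λ u x) ^ 2) := by
    intro x hx
    rw [Gfun, max_eq_left hx.1, ← hueq x hx]
  have hGv : ∀ x ∈ Icc ε Λ,
      Gfun ε v x = x * uhat lam ε Λ v x / (x + (uhat lam ε Λ v x) ^ 2) := by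
    intro x hx
    rw [Gfun, max_eq_left hx.1, ← hveq x hx]
  -- continuity of E on the interval
  have huhc : ContinuousOn (uhat lam ε Λ u) (Icc ε Λ) := fun x hx =>
    ((uhat_hasDeriv hε hu hx).continuousAt).continuousWithinAt
  have hvhc : ContinuousOn (uhat lam ε Λ v) (Icc ε Λ) := fun x hx =>
    ((uhat_hasDeriv hε hv hx).continuousAt).continuousWithinAt
  have hxne : ∀ x ∈ Icc ε Λ, x ≠ 0 := fun x hx => (lt_of_lt_of_le hε hx.1).ne'
  have hduc : ContinuousOn (dhat lam ε u) (Icc ε Λ) := by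
    apply ContinuousOn.div (continuousOn_const.mul (Pfun_cont hε hu).continuousOn) (by fun_prop)
    exact fun x hx => pow_ne_zero 2 (hxne x hx)
  have hdvc : ContinuousOn (dhat lam ε v) (Icc ε Λ) := by
    apply ContinuousOn.div (continuousOn_const.mul (Pfun_cont hε hv).continuousOn) (by fun_prop)
    exact fun x hx => pow_ne_zero 2 (hxne x hx)
  have hEc : ContinuousOn (Efun lam ε Λ u v) (Icc ε Λ) := by
    apply ContinuousOn.add
    · apply ContinuousOn.div
      · exact (continuousOn_const.mul continuousOn_id).mul
          (((huhc.pow 2).sub (hvhc.pow 2)).pow 2)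
      · exact ((continuousOn_id.add (huhc.pow 2)).mul (continuousOn_id.add (hvhc.pow 2)))
      · intro x hx
        have h1 := hupos x hx
        have h2 := hvpos x hx
        have hx0 : (0:ℝ) < x := lt_of_lt_of_le hε hx.1
        have : 0 < (x + (uhat lam ε Λ u x) ^ 2) * (x + (uhat lam ε Λ v x) ^ 2) := by positivity
        exact this.ne'
    · apply ContinuousOn.mul (continuousOn_pow 2)
      apply ContinuousOn.add
      · exact (((hvhc.mul hduc).div huhc fun x hx => (hupos x hx).ne').sub hdvc).pow 2
      · exact (((huhc.mul hdvc).div hvhc fun x hx => (hvpos x hx).ne').sub hduc).pow 2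
  -- FTC
  have hderiv : ∀ x ∈ uIcc ε Λ, HasDerivAt (Wfun lam ε Λ u v) (Efun lam ε Λ u v x) x := by
    intro x hx
    rw [uIcc_of_le hεΛ.le] at hx
    exact W_hasDeriv hε hu hv hx (hupos x hx) (hvpos x hx) (hGu x hx) (hGv x hx)
  have hEi : IntervalIntegrable (Efun lam ε Λ u v) volume ε Λ :=
    (hEc.mono (by rw [uIcc_of_le hεΛ.le])).intervalIntegrable
  have hFTC : (∫ x in ε..Λ, Efun lam ε Λ u v x)
      = Wfun lam ε Λ u v Λ - Wfun lam ε Λ u v ε :=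
    integral_eq_sub_of_hasDerivAt hderiv hEi
  -- boundary values
  have hWε : Wfun lam ε Λ u v ε = 0 := by
    have h1 : Pfun ε u ε = 0 := integral_same
    have h2 : Pfun ε v ε = 0 := integral_same
    rw [Wfun, h1, h2]
    ring
  have hWΛ : Wfun lam ε Λ u v Λ = 0 := by
    have hΛ0 : (0:ℝ) < Λ := lt_trans hε hεΛ
    have hQu : Qfun ε Λ u Λ = 0 := integral_same
    have hQv : Qfun ε Λ v Λ = 0 := integral_same
    have hΛmem : Λ ∈ Icc ε Λ := ⟨hεΛ.le, le_rfl⟩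
    have ha := hupos Λ hΛmem
    have hb := hvpos Λ hΛmem
    have hAu : lam / 4 * Pfun ε u Λ = Λ * uhat lam ε Λ u Λ := by
      rw [uhat, hQu]
      field_simp
      ring
    have hAv : lam / 4 * Pfun ε v Λ = Λ * uhat lam ε Λ v Λ := by
      rw [uhat, hQv]
      field_simp
      ring
    have e1 : -(lam / 4) * Pfun ε u Λ = -(Λ * uhat lam ε Λ u Λ) := by linarith
    have e2 : -(lam / 4) * Pfun ε v Λ = -(Λ * uhat lam ε Λ v Λ) := by linarith
    rw [Wfun, e1, e2]
    field_simp
    ring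
  have hzero : (∫ x in ε..Λ, Efun lam ε Λ u v x) = 0 := by
    rw [hFTC, hWε, hWΛ]; ring
  -- nonnegativity
  have hEnn : ∀ x ∈ Icc ε Λ, 0 ≤ Efun lam ε Λ u v x := by
    intro x hx
    have hx0 : (0:ℝ) < x := lt_of_lt_of_le hε hx.1
    have h1 := hupos x hx
    have h2 := hvpos x hx
    rw [Efun]
    have t1 : 0 ≤ lam / 4 * x * ((uhat lam ε Λ u x) ^ 2 - (uhat lam ε Λ v x) ^ 2) ^ 2 /
        ((x + (uhat lam ε Λ u x) ^ 2) * (x + (uhat lam ε Λ v x) ^ 2)) := by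
      apply div_nonneg
      · have : 0 ≤ lam / 4 * x := by positivity
        exact mul_nonneg this (sq_nonneg _)
      · have : 0 < (x + (uhat lam ε Λ u x) ^ 2) * (x + (uhat lam ε Λ v x) ^ 2) := by positivity
        exact this.le
    have t2 : 0 ≤ x ^ 2 * ((uhat lam ε Λ v x * dhat lam ε u x / uhat lam ε Λ u x
        - dhat lam ε v x) ^ 2
        + (uhat lam ε Λ u x * dhat lam ε v x / uhat lam ε Λ v x - dhat lam ε u x) ^ 2) := by
      positivity
    linarith
  -- E vanishes identically
  have hEzero := eq_zero_of_integral_zero hεΛ hEc hEnn hzero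
  -- conclude pointwise equality
  intro x hx
  have hx0 : (0:ℝ) < x := lt_of_lt_of_le hε hx.1
  have h1 := hupos x hx
  have h2 := hvpos x hx
  have hE := hEzero x hx
  rw [Efun] at hE
  set a := uhat lam ε Λ u x with hadef
  set b := uhat lam ε Λ v x with hbdef
  have hD : 0 < (x + a ^ 2) * (x + b ^ 2) := by positivity
  have t1 : 0 ≤ lam / 4 * x * (a ^ 2 - b ^ 2) ^ 2 / ((x + a ^ 2) * (x + b ^ 2)) := by
    apply div_nonneg
    · have : 0 ≤ lam / 4 * x := by positivity
      exact mul_nonneg this (sq_nonneg _)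
    · exact hD.le
  have t2 : 0 ≤ x ^ 2 * ((b * dhat lam ε u x / a - dhat lam ε v x) ^ 2
      + (a * dhat lam ε v x / b - dhat lam ε u x) ^ 2) := by positivity
  have e1 : lam / 4 * x * (a ^ 2 - b ^ 2) ^ 2 / ((x + a ^ 2) * (x + b ^ 2)) = 0 := by
    linarith
  have e2 : (a ^ 2 - b ^ 2) ^ 2 = 0 := by
    rcases div_eq_zero_iff.mp e1 with h | h
    · have hlx : lam / 4 * x ≠ 0 := by positivity
      rcases mul_eq_zero.mp h with h' | h'
      · exact absurd h' hlx
      · exact h'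
    · exact absurd h hD.ne'
  have e3 : a ^ 2 = b ^ 2 := by
    have := pow_eq_zero_iff (n := 2) (by norm_num) |>.mp e2
    linarith [sub_eq_zero.mp this]
  have hab : a = b := by
    have hle : a ≤ b := by nlinarith
    have hge : b ≤ a := by nlinarith
    linarith
  rw [hveq x hx, hueq x hx, ← hadef, ← hbdef, hab]

theorem stmt_13 (ε Λ lam : ℝ) (hε : 0 < ε) (hεΛ : ε < Λ) (hlam : 2 < lam)
    (hratio : ε / Λ ≤ min (1 / 16)
      (((Real.sqrt (lam ^ 2 + 128 * (lam - 2)) - lam) / 64) ^ 2))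
    (u₀ : ℝ → ℝ) (hu₀ : memV lam ε Λ u₀)
    (hfix : ∀ x ∈ Set.Icc ε Λ, u₀ x = opA lam ε Λ u₀ x)
    (hsq : ∀ x ∈ Set.Icc ε Λ, u₀ x ≤ Real.sqrt x) :
    ∀ v₀ : ℝ → ℝ, memV lam ε Λ v₀ →
      (∀ x ∈ Set.Icc ε Λ, v₀ x = opA lam ε Λ v₀ x) →
      ∀ x ∈ Set.Icc ε Λ, v₀ x = u₀ x := by
  intro v₀ hv₀ hvfix x hx
  have hlam0 : (0:ℝ) < lam := lt_trans two_pos hlam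
  have hΛ0 : (0:ℝ) < Λ := lt_trans hε hεΛ
  -- clamped (globally continuous, positive) versions
  set cl : ℝ → ℝ := fun y => max ε (min y Λ) with hcl
  have hclmem : ∀ y, cl y ∈ Icc ε Λ := by
    intro y
    constructor
    · exact le_max_left _ _
    · exact max_le hεΛ.le (min_le_right _ _)
  have hclid : ∀ y ∈ Icc ε Λ, cl y = y := by
    intro y hy
    rw [hcl]
    simp only [min_eq_left hy.2, max_eq_right hy.1]
  have hclcont : Continuous cl := by fun_prop
  set ub : ℝ → ℝ := fun y => u₀ (cl y) with hub
  set vb : ℝ → ℝ := fun y => v₀ (cl y) with hvb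
  have hubc : Continuous ub := hu₀.1.comp_continuous hclcont hclmem
  have hvbc : Continuous vb := hv₀.1.comp_continuous hclcont hclmem
  have hwpos : ∀ z ∈ Icc ε Λ, 0 < wfun lam ε Λ z := by
    intro z hz
    have hz0 : (0:ℝ) < z := lt_of_lt_of_le hε hz.1
    rw [wfun]
    have h1 : 0 < 4 * ε / lam := by positivity
    have h2 : 0 < ε / (Λ * z) := by positivity
    exact mul_pos h1 (Real.sqrt_pos.mpr h2)
  have hubp : ∀ y, 0 < ub y := fun y =>
    lt_of_lt_of_le (hwpos _ (hclmem y)) (hu₀.2 _ (hclmem y)).1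
  have hvbp : ∀ y, 0 < vb y := fun y =>
    lt_of_lt_of_le (hwpos _ (hclmem y)) (hv₀.2 _ (hclmem y)).1
  have hopA_ub : ∀ z ∈ Icc ε Λ, opA lam ε Λ ub z = opA lam ε Λ u₀ z := by
    intro z hz
    rw [opA, opA]
    congr 1
    apply integral_congr
    intro y hy
    rw [uIcc_of_le hεΛ.le] at hy
    rw [hub]
    simp only [hclid y hy]
  have hopA_vb : ∀ z ∈ Icc ε Λ, opA lam ε Λ vb z = opA lam ε Λ v₀ z := by
    intro z hz
    rw [opA, opA]
    congr 1
    apply integral_congr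
    intro y hy
    rw [uIcc_of_le hεΛ.le] at hy
    rw [hvb]
    simp only [hclid y hy]
  have hubfix : ∀ z ∈ Icc ε Λ, ub z = opA lam ε Λ ub z := by
    intro z hz
    rw [hopA_ub z hz, hub]
    simp only [hclid z hz]
    exact hfix z hz
  have hvbfix : ∀ z ∈ Icc ε Λ, vb z = opA lam ε Λ vb z := by
    intro z hz
    rw [hopA_vb z hz, hvb]
    simp only [hclid z hz]
    exact hvfix z hz
  have hkey := key ε Λ lam hε hεΛ hlam0 hubc hvbc hubp hvbp hubfix hvbfix x hx
  rw [hub, hvb] at hkey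
  simp only [hclid x hx] at hkey
  exact hkey
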